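/- Key lemma, subsolution part: assume the steady assumptions and let u ∈ USC(Γ) be a viscosity subsolution and v ∈ LSC(Γ) a viscosity supersolution of problem (P) such that max_Γ (u − v) = (u − v)(O). Then for every 1 ≤ i ≤ N, the quantities p̲_i = liminf_{t→0⁺}(u_i(t)−u_i(0))/t and p̄_i = limsup_{t→0⁺}(u_i(t)−u_i(0))/t are finite, and the one-dimensional superdifferential satisfies D⁺u_i(0) = [p̄_i, +∞). -/

import Mathlib

open Set Filter Topology

namespace Paper

/-- Data of the junction problem (P): a junction with `N` edges of lengths `ℓ i`,
glued at the junction point `O` (parameter `0` of each edge), with a (possibly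
degenerate) diffusion `a i`, Hamiltonians `H i`, a Kirchhoff nonlinearity `F`,
Dirichlet data `h i` and a constant `lam > 0`.  Functions on the junction `Γ`
are represented edge-wise: `u : Fin N → ℝ → ℝ`, where only the values of
`u i` on `[0, ℓ i]` are relevant and `u i 0` represents the value at `O`. -/
structure Data (N : ℕ) where
  ℓ : Fin N → ℝ
  ℓ_pos : ∀ i, 0 < ℓ i
  lam : ℝ
  lam_pos : 0 < lam
  a : Fin N → ℝ → ℝ
  a_nonneg : ∀ i, ∀ t ∈ Set.Icc (0:ℝ) (ℓ i), 0 ≤ a i t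
  a_cont : ∀ i, ContinuousOn (a i) (Set.Icc 0 (ℓ i))
  H : Fin N → ℝ → ℝ → ℝ
  H_cont : ∀ i, ContinuousOn (fun q : ℝ × ℝ => H i q.1 q.2)
      ((Set.Icc 0 (ℓ i)) ×ˢ (Set.univ : Set ℝ))
  F : ℝ → (Fin N → ℝ) → ℝ
  F_cont : Continuous (fun q : ℝ × (Fin N → ℝ) => F q.1 q.2)
  h : Fin N → ℝ

variable {N : ℕ}

/-- A family of edge functions defines a function on `Γ`: values at `O` agree. -/
def Glued (u : Fin N → ℝ → ℝ) : Prop := ∀ i j : Fin N, u i 0 = u j 0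

/-- `u ∈ USC(Γ)`. -/
def IsUSC (D : Data N) (u : Fin N → ℝ → ℝ) : Prop :=
  ∀ i, UpperSemicontinuousOn (u i) (Set.Icc 0 (D.ℓ i))

/-- `u ∈ LSC(Γ)`. -/
def IsLSC (D : Data N) (u : Fin N → ℝ → ℝ) : Prop :=
  ∀ i, LowerSemicontinuousOn (u i) (Set.Icc 0 (D.ℓ i))

/-- Test functions in `C²(Γ)` (edge-wise C², glued at `O`). -/
def IsTest (φ : Fin N → ℝ → ℝ) : Prop :=
  Glued φ ∧ ∀ i, ContDiff ℝ 2 (φ i)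

/-- `G_i(r,p,X,x) = λ r − a_i(x) X + H_i(x,p)`. -/
def G (D : Data N) (i : Fin N) (r p X t : ℝ) : ℝ :=
  D.lam * r - D.a i t * X + D.H i t p

/-- Local maximum point of an edge-wise function at an interior edge point. -/
def LocalMaxEdge (D : Data N) (w : Fin N → ℝ → ℝ) (i : Fin N) (t : ℝ) : Prop :=
  ∃ δ > 0, ∀ s ∈ Set.Icc (0:ℝ) (D.ℓ i), |s - t| < δ → w i s ≤ w i t

def LocalMinEdge (D : Data N) (w : Fin N → ℝ → ℝ) (i : Fin N) (t : ℝ) : Prop :=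
  ∃ δ > 0, ∀ s ∈ Set.Icc (0:ℝ) (D.ℓ i), |s - t| < δ → w i t ≤ w i s

/-- Local maximum point at the junction point `O`. -/
def LocalMaxO (D : Data N) (w : Fin N → ℝ → ℝ) : Prop :=
  ∃ δ > 0, ∀ j, ∀ s ∈ Set.Icc (0:ℝ) (D.ℓ j), s < δ → w j s ≤ w j 0

def LocalMinO (D : Data N) (w : Fin N → ℝ → ℝ) : Prop :=
  ∃ δ > 0, ∀ j, ∀ s ∈ Set.Icc (0:ℝ) (D.ℓ j), s < δ → w j 0 ≤ w j s

/-- Local maximum point at the boundary vertex `v_i` (parameter `ℓ i`). -/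
def LocalMaxVert (D : Data N) (w : Fin N → ℝ → ℝ) (i : Fin N) : Prop :=
  ∃ δ > 0, ∀ s ∈ Set.Icc (0:ℝ) (D.ℓ i), D.ℓ i - s < δ → w i s ≤ w i (D.ℓ i)

def LocalMinVert (D : Data N) (w : Fin N → ℝ → ℝ) (i : Fin N) : Prop :=
  ∃ δ > 0, ∀ s ∈ Set.Icc (0:ℝ) (D.ℓ i), D.ℓ i - s < δ → w i (D.ℓ i) ≤ w i s

/-- Viscosity subsolution of problem (P), junction viscosity sense. -/
def IsSubsol (D : Data N) (u : Fin N → ℝ → ℝ) : Prop :=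
  IsUSC D u ∧ Glued u ∧
  ∀ φ : Fin N → ℝ → ℝ, IsTest φ →
    ((∀ i, ∀ t ∈ Set.Ioo (0:ℝ) (D.ℓ i),
        LocalMaxEdge D (fun j s => u j s - φ j s) i t →
        G D i (u i t) (deriv (φ i) t) (deriv (deriv (φ i)) t) t ≤ 0) ∧
     (LocalMaxO D (fun j s => u j s - φ j s) →
        (∃ i, G D i (u i 0) (deriv (φ i) 0) (deriv (deriv (φ i)) 0) 0 ≤ 0) ∨
        (∀ i, D.F (u i 0) (fun j => deriv (φ j) 0) ≤ 0)) ∧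
     (∀ i, LocalMaxVert D (fun j s => u j s - φ j s) i →
        G D i (u i (D.ℓ i)) (deriv (φ i) (D.ℓ i)) (deriv (deriv (φ i)) (D.ℓ i)) (D.ℓ i) ≤ 0 ∨
        u i (D.ℓ i) ≤ D.h i))

/-- Viscosity supersolution of problem (P), junction viscosity sense. -/
def IsSupersol (D : Data N) (v : Fin N → ℝ → ℝ) : Prop :=
  IsLSC D v ∧ Glued v ∧
  ∀ φ : Fin N → ℝ → ℝ, IsTest φ →
    ((∀ i, ∀ t ∈ Set.Ioo (0:ℝ) (D.ℓ i),
        LocalMinEdge D (fun j s => v j s - φ j s) i t →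
        0 ≤ G D i (v i t) (deriv (φ i) t) (deriv (deriv (φ i)) t) t) ∧
     (LocalMinO D (fun j s => v j s - φ j s) →
        (∃ i, 0 ≤ G D i (v i 0) (deriv (φ i) 0) (deriv (deriv (φ i)) 0) 0) ∨
        (∀ i, 0 ≤ D.F (v i 0) (fun j => deriv (φ j) 0))) ∧
     (∀ i, LocalMinVert D (fun j s => v j s - φ j s) i →
        0 ≤ G D i (v i (D.ℓ i)) (deriv (φ i) (D.ℓ i)) (deriv (deriv (φ i)) (D.ℓ i)) (D.ℓ i) ∨
        D.h i ≤ v i (D.ℓ i)))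

/-- Assumption (Ham) for the Hamiltonian `H i`, with constant `C`. -/
def Ham (D : Data N) (C : ℝ) (i : Fin N) : Prop :=
  (∀ t ∈ Set.Icc (0:ℝ) (D.ℓ i), ∀ s ∈ Set.Icc (0:ℝ) (D.ℓ i), ∀ p : ℝ,
      |D.H i t p - D.H i s p| ≤ C * (1 + |p|) * |t - s|) ∧
  (∀ t ∈ Set.Icc (0:ℝ) (D.ℓ i), ∀ p q : ℝ, |D.H i t p - D.H i t q| ≤ C * |p - q|)

/-- Assumption (Hcoercive) for `H i` on the set `S`, with constant `C`. -/
def Coercive (D : Data N) (C : ℝ) (i : Fin N) (S : Set ℝ) : Prop :=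
  ∀ t ∈ S, ∀ p : ℝ, C⁻¹ * |p| - C ≤ D.H i t p

/-- Assumption (hyp-diff) for the diffusion `a i`. -/
def HypDiff (D : Data N) (i : Fin N) : Prop :=
  ∃ σ : ℝ → ℝ, (∃ C : NNReal, LipschitzOnWith C σ (Set.Icc 0 (D.ℓ i))) ∧
    ∀ t ∈ Set.Icc (0:ℝ) (D.ℓ i), D.a i t = (σ t) ^ 2

/-- Assumption (hyp-kirch) for the Kirchhoff nonlinearity `F`. -/
def Kirchhoff (D : Data N) : Prop :=
  (∀ (r s : ℝ) (p q : Fin N → ℝ), s ≤ r → (∀ i, p i ≤ q i) → D.F s q ≤ D.F r p) ∧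
  (∀ (r s : ℝ) (p q : Fin N → ℝ), s ≤ r → (∀ i, p i ≤ q i) → (∃ j, p j < q j) →
      D.F s q < D.F r p) ∧
  (∀ (i : Fin N) (r : ℝ) (p : Fin N → ℝ),
      Filter.Tendsto (fun z : ℝ => D.F r (Function.update p i z))
        Filter.atBot Filter.atTop)

/-- The steady assumptions (2.9). -/
def Steady (D : Data N) (C : ℝ) : Prop :=
  0 < C ∧ (∀ i, Ham D C i) ∧ (∀ i, HypDiff D i) ∧
  (∀ i, D.a i 0 = 0 → Coercive D C i (Set.Icc 0 (D.ℓ i))) ∧ Kirchhoff D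

/-- Assumption (hyp-dir). -/
def HypDir (D : Data N) (C : ℝ) : Prop :=
  ∀ i, 0 < D.a i (D.ℓ i) ∨
    ∃ δ > 0, Coercive D C i (Set.Icc (D.ℓ i - δ) (D.ℓ i))


/-- One-dimensional (first-order) superdifferential at `0⁺` of `w : [0,∞) → ℝ`:
`p ∈ D⁺w(0)` iff `w(t) ≤ w(0) + p t + o(t)` as `t → 0⁺`. -/
def D1plus (w : ℝ → ℝ) : Set ℝ :=
  {p | ∀ ε > 0, ∀ᶠ t in 𝓝[>] (0:ℝ), w t ≤ w 0 + p * t + ε * t}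

/-- One-dimensional (first-order) subdifferential at `0⁺`:
`q ∈ D⁻w(0)` iff `w(t) ≥ w(0) + q t + o(t)` as `t → 0⁺`. -/
def D1minus (w : ℝ → ℝ) : Set ℝ :=
  {q | ∀ ε > 0, ∀ᶠ t in 𝓝[>] (0:ℝ), w 0 + q * t - ε * t ≤ w t}

/-- `limsup_{t→0⁺} (w(t) − w(0))/t`, as an extended real. -/
noncomputable def diffQuotLimsup (w : ℝ → ℝ) : EReal :=
  Filter.limsup (fun t : ℝ => (((w t - w 0) / t : ℝ) : EReal)) (𝓝[>] (0:ℝ))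

/-- `liminf_{t→0⁺} (w(t) − w(0))/t`, as an extended real. -/
noncomputable def diffQuotLiminf (w : ℝ → ℝ) : EReal :=
  Filter.liminf (fun t : ℝ => (((w t - w 0) / t : ℝ) : EReal)) (𝓝[>] (0:ℝ))



lemma usc_exists_max {f : ℝ → ℝ} {s : Set ℝ} (hs : IsCompact s) (hne : s.Nonempty)
    (hf : UpperSemicontinuousOn f s) : ∃ x ∈ s, ∀ y ∈ s, f y ≤ f x := by
  by_contra h
  push_neg at h
  have key : ∀ x ∈ s, ∃ y : ℝ, y ∈ s ∧ ∃ U : Set ℝ, U ∈ 𝓝 x ∧ ∀ z ∈ U ∩ s, f z < f y := by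
    intro x hx
    obtain ⟨y, hy, hxy⟩ := h x hx
    have hev := hf x hx (f y) hxy
    rw [eventually_nhdsWithin_iff] at hev
    obtain ⟨U, hU, hUmem⟩ := hev.exists_mem
    exact ⟨y, hy, U, hU, fun z hz => hUmem z hz.1 hz.2⟩
  choose y hy U hU hUlt using key
  obtain ⟨t, hcov⟩ := hs.elim_nhds_subcover' U hU
  have htne : t.Nonempty := by
    obtain ⟨x, hx⟩ := hne
    obtain ⟨z, hz, -⟩ := mem_iUnion₂.mp (hcov hx)
    exact ⟨z, hz⟩
  obtain ⟨b, hb, hbmax⟩ := t.exists_max_image (fun z => f (y z.1 z.2)) htne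
  have hyb : y b.1 b.2 ∈ s := hy _ _
  obtain ⟨c, hc, hcU⟩ := mem_iUnion₂.mp (hcov hyb)
  have h1 : f (y b.1 b.2) < f (y c.1 c.2) := hUlt c.1 c.2 _ ⟨hcU, hyb⟩
  have h2 : f (y c.1 c.2) ≤ f (y b.1 b.2) := hbmax c hc
  linarith

noncomputable def quad (p q : ℝ) : ℝ → ℝ := fun s => p * s + q * s ^ 2

lemma quad_hasDeriv (p q s : ℝ) : HasDerivAt (quad p q) (p + 2 * q * s) s := by
  have h1 : HasDerivAt (fun x : ℝ => p * x) (p * 1) s := (hasDerivAt_id s).const_mul p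
  have h2 : HasDerivAt (fun x : ℝ => q * x ^ 2) (q * ((2:ℕ) * s ^ (2 - 1))) s :=
    (hasDerivAt_pow 2 s).const_mul q
  have := h1.add h2
  have he : p * 1 + q * ((2:ℕ) * s ^ (2 - 1)) = p + 2 * q * s := by push_cast; ring
  rw [he] at this
  exact this

lemma quad_deriv (p q : ℝ) : deriv (quad p q) = fun s => p + 2 * q * s :=
  funext fun s => (quad_hasDeriv p q s).deriv

lemma quad_deriv2 (p q : ℝ) : deriv (deriv (quad p q)) = fun _ => 2 * q := by
  rw [quad_deriv]
  funext s
  have h : HasDerivAt (fun s : ℝ => p + 2 * q * s) (0 + 2 * q * 1) s :=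
    (hasDerivAt_const s p).add ((hasDerivAt_id s).const_mul (2 * q))
  simpa using h.deriv

lemma lin_deriv (p q : ℝ) : deriv (fun s : ℝ => p + 2 * q * s) = fun _ => 2 * q := by
  funext s
  have h : HasDerivAt (fun s : ℝ => p + 2 * q * s) (0 + 2 * q * 1) s :=
    (hasDerivAt_const s p).add ((hasDerivAt_id s).const_mul (2 * q))
  simpa using h.deriv

lemma quad_contDiff (p q : ℝ) : ContDiff ℝ 2 (quad p q) := by
  unfold quad
  exact (contDiff_const.mul contDiff_id).add (contDiff_const.mul (contDiff_id.pow 2))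

lemma quad_zero (p q : ℝ) : quad p q 0 = 0 := by simp [quad]



lemma H_lower (D : Data N) (C : ℝ) (hC : 0 < C) (i : Fin N) (hHam : Ham D C i) :
    ∀ t ∈ Set.Icc (0:ℝ) (D.ℓ i), ∀ q : ℝ,
      -((|D.H i 0 0| + C * D.ℓ i + C + 1) * (1 + |q|)) ≤ D.H i t q := by
  intro t ht q
  have hl := D.ℓ_pos i
  have h0 : (0:ℝ) ∈ Set.Icc (0:ℝ) (D.ℓ i) := ⟨le_refl _, hl.le⟩
  have e1 := hHam.1 t ht 0 h0 q
  have e2 := hHam.2 0 h0 q 0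
  rw [sub_zero, abs_of_nonneg ht.1] at e1
  rw [sub_zero] at e2
  have a1 := (abs_le.mp e1).1
  have a2 := (abs_le.mp e2).1
  have hq : 0 ≤ |q| := abs_nonneg q
  have h00 : -|D.H i 0 0| ≤ D.H i 0 0 := neg_abs_le _
  have habs : 0 ≤ |D.H i 0 0| := abs_nonneg _
  have htl : t ≤ D.ℓ i := ht.2
  have ht0 : 0 ≤ t := ht.1
  nlinarith [mul_le_mul_of_nonneg_left htl (mul_nonneg hC.le (by linarith : (0:ℝ) ≤ 1 + |q|)),
    mul_nonneg hC.le hq, mul_nonneg (mul_nonneg hC.le hl.le) hq]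

set_option maxHeartbeats 1000000 in
lemma upper_bound (D : Data N) (C : ℝ) (hC : 0 < C)
    (hHam : ∀ i, Ham D C i)
    (hcoer : ∀ i, D.a i 0 = 0 → Coercive D C i (Set.Icc 0 (D.ℓ i)))
    (u : Fin N → ℝ → ℝ) (hu : IsSubsol D u) (i : Fin N) :
    ∃ L : ℝ, 0 ≤ L ∧ ∀ᶠ t in 𝓝[>] (0:ℝ), u i t ≤ u i 0 + L * t := by
  have hl := D.ℓ_pos i
  have hlam := D.lam_pos
  have hUSC := hu.1 i
  have h0mem : (0:ℝ) ∈ Set.Icc (0:ℝ) (D.ℓ i) := ⟨le_refl _, hl.le⟩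
  obtain ⟨M, hM⟩ : ∃ M : ℝ, ∀ t ∈ Set.Icc (0:ℝ) (D.ℓ i), u i t ≤ M := by
    obtain ⟨x, hx, hmax⟩ := usc_exists_max isCompact_Icc ⟨0, h0mem⟩ hUSC
    exact ⟨u i x, hmax⟩
  have hM0 : u i 0 ≤ M := hM 0 h0mem
  have habs0 : -(D.lam * |u i 0|) ≤ D.lam * u i 0 := by
    have := mul_le_mul_of_nonneg_left (neg_abs_le (u i 0)) hlam.le
    linarith [this]
  have hIooMem : ∀ ρ : ℝ, 0 < ρ → ∀ᶠ t in 𝓝[>] (0:ℝ), t ∈ Set.Ioo (0:ℝ) ρ := by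
    intro ρ hρ
    have hm : Set.Ioo (0:ℝ) ρ ∈ 𝓝[>] (0:ℝ) := Ioo_mem_nhdsGT_of_mem ⟨le_refl _, hρ⟩
    exact eventually_iff.mpr hm
  by_cases hdeg : D.a i 0 = 0
  · -- degenerate (coercive) edge
    obtain ⟨A, hA0, hA⟩ : ∃ A : ℝ, 0 ≤ A ∧ ∀ t ∈ Set.Icc (0:ℝ) (D.ℓ i), D.a i t ≤ A := by
      obtain ⟨x, hx, hmax⟩ := isCompact_Icc.exists_isMaxOn ⟨0, h0mem⟩ (D.a_cont i)
      exact ⟨D.a i x, D.a_nonneg i x hx, fun t ht => hmax ht⟩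
    obtain ⟨θ, hθdef⟩ : ∃ x : ℝ, x = (M - u i 0 + 1) / (D.ℓ i) ^ 2 := ⟨_, rfl⟩
    have hθ : 0 < θ := by rw [hθdef]; exact div_pos (by linarith) (by positivity)
    obtain ⟨K, hKdef⟩ : ∃ x : ℝ, x = C * (2 * θ * A + C + D.lam * |u i 0| + 2) := ⟨_, rfl⟩
    have hK0 : 0 < K := by
      rw [hKdef]
      have h1 : 0 ≤ 2 * θ * A := by positivity
      have h2 : 0 ≤ D.lam * |u i 0| := by positivity
      exact mul_pos hC (by linarith)
    refine ⟨K + θ * D.ℓ i, by positivity, ?_⟩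
    by_contra hev
    rw [Filter.not_eventually] at hev
    obtain ⟨t₀, ht₀, ht₀mem⟩ := (hev.and_eventually (hIooMem _ hl)).exists
    push_neg at ht₀
    set ψ := fun s => u i s - quad K θ s with hψdef
    have hψusc : UpperSemicontinuousOn ψ (Set.Icc 0 (D.ℓ i)) := by
      have hc : ContinuousOn (fun s : ℝ => -quad K θ s) (Set.Icc 0 (D.ℓ i)) :=
        ((quad_contDiff K θ).continuous.neg).continuousOn
      have h2 := hUSC.add hc.upperSemicontinuousOn
      simpa [hψdef, sub_eq_add_neg] using h2
    obtain ⟨ts, htsmem, htsmax⟩ := usc_exists_max isCompact_Icc ⟨0, h0mem⟩ hψusc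
    have ht₀Icc : t₀ ∈ Set.Icc (0:ℝ) (D.ℓ i) := ⟨ht₀mem.1.le, ht₀mem.2.le⟩
    have hψt₀ : u i 0 < ψ t₀ := by
      simp only [hψdef, quad]
      nlinarith [ht₀, mul_lt_mul_of_pos_left ht₀mem.2 (mul_pos hθ ht₀mem.1)]
    have hts0 : ψ t₀ ≤ ψ ts := htsmax t₀ ht₀Icc
    have hψ0 : ψ 0 = u i 0 := by simp [hψdef, quad]
    have htsne0 : ts ≠ 0 := by
      intro h; rw [h, hψ0] at hts0; linarith
    have hθℓ : θ * (D.ℓ i) ^ 2 = M - u i 0 + 1 := by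
      rw [hθdef]; field_simp
    have htsneℓ : ts ≠ D.ℓ i := by
      intro h
      have hMl := hM (D.ℓ i) ⟨hl.le, le_refl _⟩
      have hψℓ : ψ (D.ℓ i) ≤ u i 0 - 1 := by
        simp only [hψdef, quad]
        nlinarith [mul_nonneg hK0.le hl.le]
      rw [h] at hts0; linarith
    have htsIoo : ts ∈ Set.Ioo 0 (D.ℓ i) :=
      ⟨lt_of_le_of_ne htsmem.1 (Ne.symm htsne0), lt_of_le_of_ne htsmem.2 htsneℓ⟩
    set φ : Fin N → ℝ → ℝ := fun _ => quad K θ with hφdef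
    have hTest : IsTest φ := ⟨fun _ _ => rfl, fun _ => quad_contDiff K θ⟩
    have hLME : LocalMaxEdge D (fun j s => u j s - φ j s) i ts :=
      ⟨D.ℓ i, hl, fun s hs _ => htsmax s hs⟩
    have hsub := (hu.2.2 φ hTest).1 i ts htsIoo hLME
    simp only [hφdef, quad_deriv, lin_deriv, G] at hsub
    have hcoA := hcoer i hdeg ts ⟨htsIoo.1.le, htsIoo.2.le⟩ (K + 2 * θ * ts)
    have habsK : |K + 2 * θ * ts| = K + 2 * θ * ts :=
      abs_of_nonneg (by nlinarith [htsIoo.1.le, mul_nonneg hθ.le htsIoo.1.le])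
    rw [habsK] at hcoA
    have hinv : C⁻¹ * K = 2 * θ * A + C + D.lam * |u i 0| + 2 := by
      rw [hKdef, ← mul_assoc, inv_mul_cancel₀ hC.ne', one_mul]
    have hCmono : C⁻¹ * K ≤ C⁻¹ * (K + 2 * θ * ts) :=
      mul_le_mul_of_nonneg_left
        (by nlinarith [mul_nonneg hθ.le htsIoo.1.le] : K ≤ K + 2 * θ * ts)
        (inv_nonneg.mpr hC.le)
    have hu0ts : u i 0 ≤ u i ts := by
      have h3 := le_trans hψt₀.le hts0
      simp only [hψdef, quad] at h3
      nlinarith [mul_nonneg hK0.le htsIoo.1.le, mul_nonneg hθ.le (sq_nonneg ts)]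
    have hlamts : D.lam * u i 0 ≤ D.lam * u i ts := mul_le_mul_of_nonneg_left hu0ts hlam.le
    have hats : D.a i ts * (2 * θ) ≤ A * (2 * θ) :=
      mul_le_mul_of_nonneg_right (hA ts ⟨htsIoo.1.le, htsIoo.2.le⟩) (by positivity)
    linarith
  · -- non-degenerate (elliptic) edge
    have hα0 : 0 < D.a i 0 := lt_of_le_of_ne (D.a_nonneg i 0 h0mem) (Ne.symm hdeg)
    obtain ⟨α, hαdef⟩ : ∃ x : ℝ, x = D.a i 0 / 2 := ⟨_, rfl⟩
    have hα : 0 < α := by rw [hαdef]; positivity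
    have haev : ∀ᶠ t in 𝓝[Set.Icc 0 (D.ℓ i)] (0:ℝ), α < D.a i t :=
      (D.a_cont i 0 h0mem).eventually (eventually_gt_nhds (by rw [hαdef]; linarith))
    rw [eventually_nhdsWithin_iff, Metric.eventually_nhds_iff] at haev
    obtain ⟨η, hη0, hη⟩ := haev
    obtain ⟨B, hBdef⟩ : ∃ x : ℝ, x = |D.H i 0 0| + C * D.ℓ i + C + 1 := ⟨_, rfl⟩
    have hB : ∀ t ∈ Set.Icc (0:ℝ) (D.ℓ i), ∀ q : ℝ, -(B * (1 + |q|)) ≤ D.H i t q := by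
      intro t ht q
      rw [hBdef]
      exact H_lower D C hC i (hHam i) t ht q
    have hB1 : 1 ≤ B := by
      have h1 : 0 ≤ |D.H i 0 0| := abs_nonneg _
      have h2 : 0 ≤ C * D.ℓ i := by positivity
      rw [hBdef]; linarith
    obtain ⟨β₁, hβ₁def⟩ : ∃ x : ℝ, x = (B + D.lam * |u i 0| + D.lam + 1) / α := ⟨_, rfl⟩
    obtain ⟨β₂, hβ₂def⟩ : ∃ x : ℝ, x = B / α := ⟨_, rfl⟩
    have hβ₁ : 0 < β₁ := by
      rw [hβ₁def]
      have : 0 ≤ D.lam * |u i 0| := by positivity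
      exact div_pos (by linarith) hα
    have hβ₂ : 0 < β₂ := by rw [hβ₂def]; exact div_pos (by linarith) hα
    obtain ⟨r, hrdef⟩ : ∃ x : ℝ, x = min (min η (D.ℓ i)) (α / (4 * B)) := ⟨_, rfl⟩
    have hr0 : 0 < r := by
      rw [hrdef]
      apply lt_min (lt_min hη0 hl)
      positivity
    have hrη : r ≤ η := by
      rw [hrdef]; exact le_trans (min_le_left _ _) (min_le_left _ _)
    have hrℓ : r ≤ D.ℓ i := by
      rw [hrdef]; exact le_trans (min_le_left _ _) (min_le_right _ _)
    have hrB : r ≤ α / (4 * B) := by rw [hrdef]; exact min_le_right _ _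
    have hrβ₂ : r * β₂ ≤ 1 / 4 := by
      have hB0 : (0:ℝ) < B := by linarith
      rw [hβ₂def]
      have h1 : r * (B / α) ≤ (α / (4 * B)) * (B / α) :=
        mul_le_mul_of_nonneg_right hrB (by positivity)
      have h2 : (α / (4 * B)) * (B / α) = 1 / 4 := by
        field_simp
      linarith
    obtain ⟨K, hKdef⟩ : ∃ x : ℝ,
        x = max (max 1 (2 * r * β₁)) ((M + r ^ 2 * β₁ - u i 0 + 1) * (4 / (3 * r))) := ⟨_, rfl⟩
    have hK1 : (1:ℝ) ≤ K := by
      rw [hKdef]; exact le_trans (le_max_left _ _) (le_max_left _ _)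
    have hK0 : 0 < K := lt_of_lt_of_le one_pos hK1
    have hKrβ₁ : 2 * r * β₁ ≤ K := by
      rw [hKdef]; exact le_trans (le_max_right _ _) (le_max_left _ _)
    have hKend : (M + r ^ 2 * β₁ - u i 0 + 1) * (4 / (3 * r)) ≤ K := by
      rw [hKdef]; exact le_max_right _ _
    obtain ⟨θ, hθdef⟩ : ∃ x : ℝ, x = β₁ + β₂ * K := ⟨_, rfl⟩
    have hθ : 0 < θ := by rw [hθdef]; positivity
    have hθexp : θ * r = β₁ * r + β₂ * K * r := by rw [hθdef]; ring
    have hθr : θ * r ≤ r * β₁ + K / 4 := by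
      have h1 := mul_le_mul_of_nonneg_right hrβ₂ hK0.le
      linarith [hθexp]
    have hθrK : θ * r ≤ K := by linarith [hθr, hKrβ₁, hK0.le]
    refine ⟨K, hK0.le, ?_⟩
    by_contra hev
    rw [Filter.not_eventually] at hev
    obtain ⟨t₀, ht₀, ht₀mem⟩ := (hev.and_eventually (hIooMem _ hr0)).exists
    push_neg at ht₀
    set ψ := fun s => u i s - quad K (-θ) s with hψdef
    have hψusc : UpperSemicontinuousOn ψ (Set.Icc 0 r) := by
      have hc : ContinuousOn (fun s : ℝ => -quad K (-θ) s) (Set.Icc 0 r) :=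
        ((quad_contDiff K (-θ)).continuous.neg).continuousOn
      have h2 := (hUSC.mono (Set.Icc_subset_Icc (le_refl _) hrℓ)).add hc.upperSemicontinuousOn
      simpa [hψdef, sub_eq_add_neg] using h2
    have h0r : (0:ℝ) ∈ Set.Icc (0:ℝ) r := ⟨le_refl _, hr0.le⟩
    obtain ⟨ts, htsmem, htsmax⟩ := usc_exists_max isCompact_Icc ⟨0, h0r⟩ hψusc
    have ht₀Icc : t₀ ∈ Set.Icc (0:ℝ) r := ⟨ht₀mem.1.le, ht₀mem.2.le⟩
    have hψt₀ : u i 0 < ψ t₀ := by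
      simp only [hψdef, quad]
      nlinarith [ht₀, mul_nonneg hθ.le (sq_nonneg t₀)]
    have hts0 : ψ t₀ ≤ ψ ts := htsmax t₀ ht₀Icc
    have hψ0 : ψ 0 = u i 0 := by simp [hψdef, quad]
    have htsne0 : ts ≠ 0 := by
      intro h; rw [h, hψ0] at hts0; linarith
    have htsner : ts ≠ r := by
      intro h
      have hMr := hM r ⟨hr0.le, hrℓ⟩
      have hψr : ψ r ≤ u i 0 - 1 := by
        simp only [hψdef, quad]
        have h1 : θ * r ^ 2 ≤ r * (r * β₁ + K / 4) := by
          have h0 := mul_le_mul_of_nonneg_left hθr hr0.le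
          nlinarith [h0]
        have h2 : (M + r ^ 2 * β₁ - u i 0 + 1) ≤ K * (3 * r) / 4 := by
          have h := mul_le_mul_of_nonneg_right hKend (by positivity : (0:ℝ) ≤ 3 * r / 4)
          have he : (M + r ^ 2 * β₁ - u i 0 + 1) * (4 / (3 * r)) * (3 * r / 4)
              = M + r ^ 2 * β₁ - u i 0 + 1 := by
            field_simp
          rw [he] at h
          linarith
        linarith [hMr, h1, h2]
      rw [h] at hts0; linarith
    have htsIoo : ts ∈ Set.Ioo (0:ℝ) r :=
      ⟨lt_of_le_of_ne htsmem.1 (Ne.symm htsne0), lt_of_le_of_ne htsmem.2 htsner⟩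
    have htsIccℓ : ts ∈ Set.Icc (0:ℝ) (D.ℓ i) := ⟨htsIoo.1.le, le_trans htsIoo.2.le hrℓ⟩
    have htsIooℓ : ts ∈ Set.Ioo (0:ℝ) (D.ℓ i) := ⟨htsIoo.1, lt_of_lt_of_le htsIoo.2 hrℓ⟩
    set φ : Fin N → ℝ → ℝ := fun _ => quad K (-θ) with hφdef
    have hTest : IsTest φ := ⟨fun _ _ => rfl, fun _ => quad_contDiff K (-θ)⟩
    have hLME : LocalMaxEdge D (fun j s => u j s - φ j s) i ts := by
      refine ⟨r - ts, by linarith [htsIoo.2], fun s hs hd => ?_⟩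
      have hsr : s ∈ Set.Icc (0:ℝ) r := by
        constructor
        · exact hs.1
        · cases' abs_lt.mp hd with h1 h2; linarith
      exact htsmax s hsr
    have hsub := (hu.2.2 φ hTest).1 i ts htsIooℓ hLME
    simp only [hφdef, quad_deriv, lin_deriv, G] at hsub
    have hats : α < D.a i ts := by
      apply hη
      · rw [Real.dist_eq, sub_zero, abs_of_nonneg htsIoo.1.le]
        exact lt_of_lt_of_le htsIoo.2 hrη
      · exact htsIccℓ
    have hHts := hB ts htsIccℓ (K + 2 * (-θ) * ts)
    have habsq : |K + 2 * (-θ) * ts| ≤ K + 2 * θ * r := by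
      rw [abs_le]
      have p1 : θ * ts ≤ θ * r := mul_le_mul_of_nonneg_left htsIoo.2.le hθ.le
      have p2 : 0 ≤ θ * ts := mul_nonneg hθ.le htsIoo.1.le
      constructor <;> [skip; skip] <;> nlinarith [p1, p2, hK0.le]
    have hHts2 : -(B * (1 + (K + 2 * θ * r))) ≤ D.H i ts (K + 2 * (-θ) * ts) := by
      have hmono : B * (1 + |K + 2 * (-θ) * ts|) ≤ B * (1 + (K + 2 * θ * r)) :=
        mul_le_mul_of_nonneg_left (by linarith) (by linarith)
      linarith [hHts]
    have hu0ts : u i 0 ≤ u i ts := by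
      have h3 := le_trans hψt₀.le hts0
      simp only [hψdef, quad] at h3
      have q1 : θ * ts ≤ K :=
        le_trans (mul_le_mul_of_nonneg_left htsIoo.2.le hθ.le) hθrK
      have q2 := mul_le_mul_of_nonneg_left q1 htsIoo.1.le
      nlinarith [h3, q2]
    have hlamts : D.lam * u i 0 ≤ D.lam * u i ts := mul_le_mul_of_nonneg_left hu0ts hlam.le
    have h2Br : 2 * B * r ≤ α / 2 := by
      have hB0 : (0:ℝ) < B := by linarith
      have h := mul_le_mul_of_nonneg_right hrB (by positivity : (0:ℝ) ≤ 4 * B)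
      have he : α / (4 * B) * (4 * B) = α := by field_simp
      rw [he] at h
      linarith
    have hfin1 : B * (2 * θ * r) ≤ θ * α / 2 := by
      have h0 := mul_le_mul_of_nonneg_left h2Br hθ.le
      linarith [h0]
    have hαne : α ≠ 0 := ne_of_gt hα
    have hb1 : β₁ * α = B + D.lam * |u i 0| + D.lam + 1 := by
      rw [hβ₁def]; field_simp
    have hb2 : β₂ * α = B := by rw [hβ₂def]; field_simp
    have hθα : θ * α = B * (1 + K) + D.lam * |u i 0| + D.lam + 1 := by
      rw [hθdef]; linear_combination hb1 + K * hb2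
    have haθ : θ * α ≤ θ * D.a i ts := mul_le_mul_of_nonneg_left hats.le hθ.le
    have hBK : 0 ≤ B * (1 + K) := mul_nonneg (by linarith) (by linarith)
    have hlu : 0 ≤ D.lam * |u i 0| := mul_nonneg hlam.le (abs_nonneg _)
    linarith [hsub, hHts2, hlamts, habs0, haθ, hθα, hfin1, hBK, hlu]

set_option maxHeartbeats 1600000 in
lemma lower_bound (D : Data N) (C : ℝ) (hC : 0 < C)
    (hHam : ∀ i, Ham D C i)
    (hcoer : ∀ i, D.a i 0 = 0 → Coercive D C i (Set.Icc 0 (D.ℓ i)))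
    (hF : Kirchhoff D)
    (u : Fin N → ℝ → ℝ) (hu : IsSubsol D u) (i : Fin N)
    (L : Fin N → ℝ) (hL0 : ∀ j, 0 ≤ L j)
    (hL : ∀ j, ∀ᶠ t in 𝓝[>] (0:ℝ), u j t ≤ u j 0 + L j * t) :
    ∃ K : ℝ, ∀ᶠ t in 𝓝[>] (0:ℝ), u i 0 - K * t ≤ u i t := by
  classical
  have hlam := D.lam_pos
  have hglue : ∀ j, u j 0 = u i 0 := fun j => hu.2.1 j i
  have habs0 : -(D.lam * |u i 0|) ≤ D.lam * u i 0 := by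
    have := mul_le_mul_of_nonneg_left (neg_abs_le (u i 0)) hlam.le
    linarith [this]
  -- windows on which the upper bounds hold
  have hrex : ∀ j, ∃ ρ : ℝ, 0 < ρ ∧ ∀ s ∈ Set.Ioo (0:ℝ) ρ, u j s ≤ u i 0 + L j * s := by
    intro j
    have h := hL j
    rw [eventually_iff, mem_nhdsGT_iff_exists_Ioo_subset] at h
    obtain ⟨ρ, hρ, hsub⟩ := h
    refine ⟨ρ, hρ, fun s hs => ?_⟩
    have := hsub hs
    simp only [Set.mem_setOf_eq] at this
    rw [hglue j] at this
    exact this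
  choose r hr0 hrP using hrex
  -- H lower bounds
  have hBex : ∀ j, ∃ B : ℝ, 1 ≤ B ∧
      ∀ t ∈ Set.Icc (0:ℝ) (D.ℓ j), ∀ q : ℝ, -(B * (1 + |q|)) ≤ D.H j t q := by
    intro j
    refine ⟨|D.H j 0 0| + C * D.ℓ j + C + 1, ?_, H_lower D C hC j (hHam j)⟩
    have h1 : 0 ≤ |D.H j 0 0| := abs_nonneg _
    have h2 : 0 ≤ C * D.ℓ j := mul_nonneg hC.le (D.ℓ_pos j).le
    linarith
  choose B hB1 hB using hBex
  -- constants for the other edges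
  have hMex : ∀ j, ∃ Mj θj : ℝ, L j + 1 ≤ Mj ∧ 0 ≤ θj ∧
      0 < D.lam * u i 0 + 2 * θj * D.a j 0 + D.H j 0 Mj := by
    intro j
    have h0j : (0:ℝ) ∈ Set.Icc (0:ℝ) (D.ℓ j) := ⟨le_refl _, (D.ℓ_pos j).le⟩
    by_cases hdeg : D.a j 0 = 0
    · refine ⟨max (L j + 1) (C * (C + D.lam * |u i 0| + 1)), 0, le_max_left _ _, le_refl _, ?_⟩
      have hM0 : 0 ≤ max (L j + 1) (C * (C + D.lam * |u i 0| + 1)) :=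
        le_trans (by linarith [hL0 j]) (le_max_left _ _)
      have hco := hcoer j hdeg 0 h0j (max (L j + 1) (C * (C + D.lam * |u i 0| + 1)))
      rw [abs_of_nonneg hM0] at hco
      have h2 : C * (C + D.lam * |u i 0| + 1) ≤ max (L j + 1) (C * (C + D.lam * |u i 0| + 1)) :=
        le_max_right _ _
      have h3 := mul_le_mul_of_nonneg_left h2 (inv_nonneg.mpr hC.le)
      have h4 : C⁻¹ * (C * (C + D.lam * |u i 0| + 1)) = C + D.lam * |u i 0| + 1 := by
        rw [← mul_assoc, inv_mul_cancel₀ hC.ne', one_mul]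
      rw [hdeg]
      linarith
    · have ha0 : 0 < D.a j 0 := lt_of_le_of_ne (D.a_nonneg j 0 h0j) (Ne.symm hdeg)
      refine ⟨L j + 1, (D.lam * |u i 0| + B j * (1 + (L j + 1)) + 1) / (2 * D.a j 0),
        le_refl _, div_nonneg ?_ (by positivity), ?_⟩
      · have k1 : 0 ≤ D.lam * |u i 0| := mul_nonneg hlam.le (abs_nonneg _)
        have k2 : 0 ≤ B j * (1 + (L j + 1)) :=
          mul_nonneg (by linarith [hB1 j]) (by linarith [hL0 j])
        linarith
      have hHj := hB j 0 h0j (L j + 1)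
      rw [abs_of_nonneg (by linarith [hL0 j])] at hHj
      have hexp : 2 * ((D.lam * |u i 0| + B j * (1 + (L j + 1)) + 1) / (2 * D.a j 0)) * D.a j 0
          = D.lam * |u i 0| + B j * (1 + (L j + 1)) + 1 := by
        field_simp
      linarith [hexp, hHj]
  choose Mv θv hMv1 hθv0 hGpos using hMex
  -- threshold from the Kirchhoff condition
  obtain ⟨z₀, hz₀⟩ : ∃ z₀ : ℝ, ∀ z ≤ z₀, 1 ≤ D.F (u i 0) (Function.update Mv i z) := by
    have ht := (hF.2.2 i (u i 0) Mv).eventually (eventually_ge_atTop 1)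
    rw [eventually_atBot] at ht
    exact ht
  -- the constant K
  obtain ⟨K, hKdef⟩ : ∃ x : ℝ,
      x = max (max 1 (2 * C * (D.lam * (|u i 0| + 1) + C + 1))) (-2 * z₀) := ⟨_, rfl⟩
  have hK1 : (1:ℝ) ≤ K := by
    rw [hKdef]; exact le_trans (le_max_left _ _) (le_max_left _ _)
  have hK0 : 0 < K := lt_of_lt_of_le one_pos hK1
  have hKco : 2 * C * (D.lam * (|u i 0| + 1) + C + 1) ≤ K := by
    rw [hKdef]; exact le_trans (le_max_right _ _) (le_max_left _ _)
  have hKz : -2 * z₀ ≤ K := by rw [hKdef]; exact le_max_right _ _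
  have hKz2 : -(K / 2) ≤ z₀ := by linarith
  have h0i : (0:ℝ) ∈ Set.Icc (0:ℝ) (D.ℓ i) := ⟨le_refl _, (D.ℓ_pos i).le⟩
  -- uniform key inequality on edge i
  obtain ⟨θ, η, hθ0, hη0, hKey⟩ : ∃ θ η : ℝ, 0 ≤ θ ∧ 0 < η ∧
      ∀ t ∈ Set.Icc (0:ℝ) (D.ℓ i), t < η → 2 * θ * t ≤ 1 →
        0 < D.lam * (u i 0 - 1) + D.a i t * (2 * θ) + D.H i t (-(K / 2) + 2 * -θ * t) := by
    by_cases hdegi : D.a i 0 = 0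
    · refine ⟨0, D.ℓ i, le_refl _, D.ℓ_pos i, fun t ht htη h2θ => ?_⟩
      have hq : (-(K / 2) + 2 * -(0:ℝ) * t) = -(K/2) := by ring
      rw [hq]
      have hco := hcoer i hdegi t ht (-(K/2))
      rw [abs_neg, abs_of_nonneg (by linarith : (0:ℝ) ≤ K/2)] at hco
      have h3 := mul_le_mul_of_nonneg_left hKco (inv_nonneg.mpr hC.le)
      have h4 : C⁻¹ * (2 * C * (D.lam * (|u i 0| + 1) + C + 1))
          = 2 * (D.lam * (|u i 0| + 1) + C + 1) := by
        field_simp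
      rw [h4] at h3
      have h5 : -(D.lam * (|u i 0| + 1)) ≤ D.lam * (u i 0 - 1) := by
        have h6 := mul_le_mul_of_nonneg_left (neg_abs_le (u i 0)) hlam.le
        nlinarith [h6]
      have h7 : D.a i t * (2 * (0:ℝ)) = 0 := by ring
      linarith [hco, h3, h5, h7]
    · have ha0 : 0 < D.a i 0 := lt_of_le_of_ne (D.a_nonneg i 0 h0i) (Ne.symm hdegi)
      obtain ⟨α, hαdef⟩ : ∃ x : ℝ, x = D.a i 0 / 2 := ⟨_, rfl⟩
      have hα : 0 < α := by rw [hαdef]; positivity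
      have haev : ∀ᶠ t in 𝓝[Set.Icc 0 (D.ℓ i)] (0:ℝ), α < D.a i t :=
        (D.a_cont i 0 h0i).eventually (eventually_gt_nhds (by rw [hαdef]; linarith))
      rw [eventually_nhdsWithin_iff, Metric.eventually_nhds_iff] at haev
      obtain ⟨η, hη0, hη⟩ := haev
      obtain ⟨θ, hθdef⟩ : ∃ x : ℝ,
          x = (D.lam * (|u i 0| + 1) + B i * (2 + K) + 1) / α := ⟨_, rfl⟩
      have hθ0 : 0 < θ := by
        rw [hθdef]
        apply div_pos _ hα
        have h1 : 0 ≤ D.lam * (|u i 0| + 1) := by positivity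
        have h2 : 0 ≤ B i * (2 + K) := mul_nonneg (by linarith [hB1 i]) (by linarith)
        linarith
      refine ⟨θ, η, hθ0.le, hη0, fun t ht htη h2θ => ?_⟩
      have hat : α < D.a i t := by
        apply hη
        · rw [Real.dist_eq, sub_zero, abs_of_nonneg ht.1]; exact htη
        · exact ht
      have hHt := hB i t ht (-(K / 2) + 2 * -θ * t)
      have hqb : |(-(K / 2) + 2 * -θ * t)| ≤ 1 + K := by
        rw [abs_le]
        have p2 : 0 ≤ 2 * θ * t := by
          have := mul_nonneg (mul_nonneg (by norm_num : (0:ℝ) ≤ 2) hθ0.le) ht.1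
          linarith [this]
        constructor <;> nlinarith [h2θ, p2, hK0.le]
      have hHt2 : -(B i * (1 + (1 + K))) ≤ D.H i t (-(K / 2) + 2 * -θ * t) := by
        have hmono : B i * (1 + |(-(K / 2) + 2 * -θ * t)|) ≤ B i * (1 + (1 + K)) :=
          mul_le_mul_of_nonneg_left (by linarith) (by linarith [hB1 i])
        linarith [hHt]
      have hθα : θ * α = D.lam * (|u i 0| + 1) + B i * (2 + K) + 1 := by
        rw [hθdef]; field_simp
      have haθ : θ * α ≤ θ * D.a i t := mul_le_mul_of_nonneg_left hat.le hθ0.le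
      have h5 : -(D.lam * (|u i 0| + 1)) ≤ D.lam * (u i 0 - 1) := by
        have h6 := mul_le_mul_of_nonneg_left (neg_abs_le (u i 0)) hlam.le
        nlinarith [h6]
      have hBK : B i * (1 + (1 + K)) = B i * (2 + K) := by ring
      nlinarith [hHt2, haθ, hθα, h5, hBK, mul_nonneg (mul_nonneg hθ0.le hα.le) (by norm_num : (0:ℝ) ≤ 1)]
  -- the smallness radius ρ
  obtain ⟨ρ, hρdef⟩ : ∃ x : ℝ, x = min (min (D.ℓ i) η)
      (min (1 / K) (min (1 / (2 * (θ + 1))) (K / (2 * (θ + 1))))) := ⟨_, rfl⟩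
  have hθ1 : 0 < θ + 1 := by linarith
  have hρ0 : 0 < ρ := by
    rw [hρdef]
    apply lt_min (lt_min (D.ℓ_pos i) hη0)
    apply lt_min (by positivity) (lt_min (by positivity) (by positivity))
  have hρℓ : ρ ≤ D.ℓ i := by
    rw [hρdef]; exact le_trans (min_le_left _ _) (min_le_left _ _)
  have hρη : ρ ≤ η := by
    rw [hρdef]; exact le_trans (min_le_left _ _) (min_le_right _ _)
  have hρK : ρ ≤ 1 / K := by
    rw [hρdef]; exact le_trans (min_le_right _ _) (min_le_left _ _)
  have hρθ : ρ ≤ 1 / (2 * (θ + 1)) := by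
    rw [hρdef]
    exact le_trans (min_le_right _ _) (le_trans (min_le_right _ _) (min_le_left _ _))
  have hρθK : ρ ≤ K / (2 * (θ + 1)) := by
    rw [hρdef]
    exact le_trans (min_le_right _ _) (le_trans (min_le_right _ _) (min_le_right _ _))
  -- smallness facts
  have hfacts : ∀ t : ℝ, 0 < t → t ≤ ρ →
      K / 2 * t ≤ 1 / 2 ∧ θ * t ≤ 1 / 2 ∧ θ * t ≤ K / 2 := by
    intro t ht0 htρ
    have htK : t ≤ 1 / K := le_trans htρ hρK
    have h1 : K / 2 * t ≤ K / 2 * (1 / K) := mul_le_mul_of_nonneg_left htK (by positivity)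
    have h1e : K / 2 * (1 / K) = 1 / 2 := by field_simp
    have htθ : t ≤ 1 / (2 * (θ + 1)) := le_trans htρ hρθ
    have h2 : θ * t ≤ θ * (1 / (2 * (θ + 1))) := mul_le_mul_of_nonneg_left htθ hθ0
    have h2e : θ * (1 / (2 * (θ + 1))) ≤ 1 / 2 := by
      rw [mul_one_div, div_le_div_iff₀ (by linarith) (by norm_num)]
      linarith
    have htθK : t ≤ K / (2 * (θ + 1)) := le_trans htρ hρθK
    have h3 : θ * t ≤ θ * (K / (2 * (θ + 1))) := mul_le_mul_of_nonneg_left htθK hθ0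
    have h3e : θ * (K / (2 * (θ + 1))) ≤ K / 2 := by
      rw [mul_div_assoc', div_le_div_iff₀ (by linarith) (by norm_num)]
      nlinarith [hK0.le, hθ0]
    exact ⟨by linarith, by linarith, by linarith⟩
  -- main argument
  refine ⟨K, ?_⟩
  by_contra hev
  rw [Filter.not_eventually] at hev
  have hIoo : ∀ᶠ t in 𝓝[>] (0:ℝ), t ∈ Set.Ioo (0:ℝ) ρ := by
    have hm : Set.Ioo (0:ℝ) ρ ∈ 𝓝[>] (0:ℝ) := Ioo_mem_nhdsGT_of_mem ⟨le_refl _, hρ0⟩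
    exact eventually_iff.mpr hm
  obtain ⟨tK, htK, htKmem⟩ := (hev.and_eventually hIoo).exists
  push_neg at htK
  have htK0 : 0 < tK := htKmem.1
  have htKρ : tK < ρ := htKmem.2
  have htKfacts := hfacts tK htK0 htKρ.le
  set g := fun s => u i s - quad (-(K / 2)) (-θ) s with hgdef
  have hgusc : UpperSemicontinuousOn g (Set.Icc 0 tK) := by
    have hc : ContinuousOn (fun s : ℝ => -quad (-(K / 2)) (-θ) s) (Set.Icc 0 tK) :=
      ((quad_contDiff (-(K / 2)) (-θ)).continuous.neg).continuousOn
    have h2 := ((hu.1 i).mono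
      (Set.Icc_subset_Icc (le_refl _) (le_trans htKρ.le hρℓ))).add hc.upperSemicontinuousOn
    simpa [hgdef, sub_eq_add_neg] using h2
  obtain ⟨ts, htsmem, htsmax⟩ := usc_exists_max isCompact_Icc ⟨0, ⟨le_refl _, htK0.le⟩⟩ hgusc
  have hg0 : g 0 = u i 0 := by simp [hgdef, quad]
  have hgtK : g tK < u i 0 := by
    simp only [hgdef, quad]
    nlinarith [htK, htKfacts.2.2, htK0.le, mul_nonneg hθ0 htK0.le]
  have htsnetK : ts ≠ tK := by
    intro h
    have := htsmax 0 ⟨le_refl _, htK0.le⟩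
    rw [h, hg0] at this
    linarith
  by_cases hts0 : ts = 0
  · -- maximum at the junction point: use the O-condition
    have hgle : ∀ s ∈ Set.Icc (0:ℝ) tK, g s ≤ u i 0 := by
      intro s hs
      have := htsmax s hs
      rw [hts0, hg0] at this
      exact this
    set φ : Fin N → ℝ → ℝ :=
      fun j => quad (Function.update Mv i (-(K / 2)) j) (-(Function.update θv i θ j)) with hφdef
    have hTest : IsTest φ := by
      constructor
      · intro j j'; simp [hφdef, quad]
      · intro j; exact quad_contDiff _ _
    have hthnn : ∀ j, 0 ≤ Function.update θv i θ j := by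
      intro j
      rcases eq_or_ne j i with h | h
      · subst h; rw [Function.update_self]; exact hθ0
      · rw [Function.update_of_ne h]; exact hθv0 j
    have hNe : Nonempty (Fin N) := ⟨i⟩
    obtain ⟨δ, hδdef⟩ : ∃ x : ℝ, x = min tK ((Finset.univ : Finset (Fin N)).inf'
        Finset.univ_nonempty (fun j => min (r j) (1 / (Function.update θv i θ j + 1)))) :=
      ⟨_, rfl⟩
    have hδ0 : 0 < δ := by
      rw [hδdef]
      apply lt_min htK0
      rw [Finset.lt_inf'_iff]
      intro j _
      have := hthnn j
      exact lt_min (hr0 j) (by positivity)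
    have hδtK : δ ≤ tK := by rw [hδdef]; exact min_le_left _ _
    have hδj : ∀ j, δ ≤ min (r j) (1 / (Function.update θv i θ j + 1)) := by
      intro j
      rw [hδdef]
      exact le_trans (min_le_right _ _) (Finset.inf'_le _ (Finset.mem_univ j))
    have hLMO : LocalMaxO D (fun j s => u j s - φ j s) := by
      refine ⟨δ, hδ0, fun j s hs hsδ => ?_⟩
      show u j s - φ j s ≤ u j 0 - φ j 0
      have hφj0 : φ j 0 = 0 := by simp [hφdef, quad]
      rw [hφj0]
      rcases eq_or_ne j i with hji | hji
      · subst hji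
        rw [hφdef]
        simp only [Function.update_self]
        have hsIcc : s ∈ Set.Icc (0:ℝ) tK := ⟨hs.1, le_of_lt (lt_of_lt_of_le hsδ hδtK)⟩
        have := hgle s hsIcc
        simpa [hgdef] using this
      · rw [hφdef]
        simp only [Function.update_of_ne hji]
        rcases hs.1.eq_or_lt with heq | hspos
        · rw [← heq]; simp [quad]
        · have hsr : s < r j := lt_of_lt_of_le hsδ (le_trans (hδj j) (min_le_left _ _))
          have hsθ : s < 1 / (Function.update θv i θ j + 1) :=
            lt_of_lt_of_le hsδ (le_trans (hδj j) (min_le_right _ _))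
          rw [Function.update_of_ne hji] at hsθ
          have hup := hrP j s ⟨hspos, hsr⟩
          have hθs1 : θv j * s ≤ 1 := by
            have hx1 : 0 < θv j + 1 := by linarith [hθv0 j]
            rw [lt_div_iff₀ hx1] at hsθ
            nlinarith [hθv0 j, hspos.le]
          have hθs2 : θv j * s ^ 2 ≤ s := by
            nlinarith [mul_le_mul_of_nonneg_right hθs1 hspos.le]
          have hMs : (L j + 1) * s ≤ Mv j * s :=
            mul_le_mul_of_nonneg_right (hMv1 j) hspos.le
          rw [hglue j]
          simp only [quad]
          nlinarith [hup, hθs2, hMs]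
    have hO := (hu.2.2 φ hTest).2.1 hLMO
    have hd : ∀ j, deriv (φ j) 0 = Function.update Mv i (-(K / 2)) j := by
      intro j
      rw [hφdef]
      rw [quad_deriv]
      simp
    have hdd : ∀ j, deriv (deriv (φ j)) 0 = 2 * -(Function.update θv i θ j) := by
      intro j
      rw [hφdef, quad_deriv2]
    rcases hO with h | h
    · obtain ⟨j, hj⟩ := h
      rw [hd j, hdd j, hglue j] at hj
      simp only [G] at hj
      rcases eq_or_ne j i with hji | hji
      · rw [hji] at hj
        rw [Function.update_self, Function.update_self] at hj
        have hKy := hKey 0 h0i hη0 (by linarith)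
        have hq : (-(K / 2) + 2 * -θ * (0:ℝ)) = -(K / 2) := by ring
        rw [hq] at hKy
        have h8 : D.lam * (u i 0 - 1) ≤ D.lam * u i 0 :=
          mul_le_mul_of_nonneg_left (by linarith) hlam.le
        nlinarith [hj, hKy, h8]
      · rw [Function.update_of_ne hji, Function.update_of_ne hji] at hj
        have := hGpos j
        nlinarith [hj, this]
    · have hFi := h i
      have hfe : (fun j => deriv (φ j) 0) = Function.update Mv i (-(K / 2)) := funext hd
      rw [hfe] at hFi
      have := hz₀ (-(K / 2)) hKz2
      linarith
  · -- interior maximum: use the edge condition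
    have htspos : 0 < ts := lt_of_le_of_ne htsmem.1 (Ne.symm hts0)
    have htsltK : ts < tK := lt_of_le_of_ne htsmem.2 htsnetK
    have htsρ : ts < ρ := lt_trans htsltK htKρ
    have htsfacts := hfacts ts htspos htsρ.le
    set φ : Fin N → ℝ → ℝ := fun _ => quad (-(K / 2)) (-θ) with hφdef
    have hTest : IsTest φ := ⟨fun _ _ => rfl, fun _ => quad_contDiff _ _⟩
    have hLME : LocalMaxEdge D (fun j s => u j s - φ j s) i ts := by
      refine ⟨tK - ts, by linarith, fun s hs hd => ?_⟩
      have hsIcc : s ∈ Set.Icc (0:ℝ) tK := by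
        constructor
        · exact hs.1
        · cases' abs_lt.mp hd with h1 h2; linarith
      have := htsmax s hsIcc
      simpa [hφdef, hgdef] using this
    have htsIoo : ts ∈ Set.Ioo (0:ℝ) (D.ℓ i) :=
      ⟨htspos, lt_of_lt_of_le htsρ hρℓ⟩
    have hsub := (hu.2.2 φ hTest).1 i ts htsIoo hLME
    simp only [hφdef, quad_deriv, lin_deriv, G] at hsub
    have hgts : u i 0 ≤ g ts := by
      have := htsmax 0 ⟨le_refl _, htK0.le⟩
      rw [hg0] at this
      exact this
    have huts : u i 0 - 1 ≤ u i ts := by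
      simp only [hgdef, quad] at hgts
      have hθts2 : θ * ts ^ 2 ≤ 1 / 2 := by
        have h1 : ts ≤ 1 := by
          have : (1:ℝ) / K ≤ 1 := by
            rw [div_le_one hK0]; exact hK1
          linarith [le_trans htsρ.le hρK]
        nlinarith [mul_le_mul_of_nonneg_right htsfacts.2.1 htspos.le, htspos.le]
      nlinarith [hgts, htsfacts.1, hθts2]
    have hKy := hKey ts ⟨htsIoo.1.le, htsIoo.2.le⟩ (lt_of_lt_of_le htsρ hρη)
      (by linarith [htsfacts.2.1])
    have h8 : D.lam * (u i 0 - 1) ≤ D.lam * u i ts :=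
      mul_le_mul_of_nonneg_left huts hlam.le
    nlinarith [hsub, hKy, h8]

/-- Lemma 4.2 (i), key lemma, subsolution part.  Under the
steady assumptions, if `u − v` attains its maximum over `Γ` at `O`, then for
every edge `i` the quantities `p̲_i = liminf` and `p̄_i = limsup` of the
difference quotients of `u_i` at `0⁺` are finite, and `D⁺u_i(0) = [p̄_i, ∞)`. -/
theorem key_lemma_subsolution (N : ℕ) (D : Data N) (C : ℝ)
    (hSteady : Steady D C)
    (u v : Fin N → ℝ → ℝ) (hu : IsSubsol D u) (hv : IsSupersol D v)
    (hmax : ∀ i, ∀ t ∈ Set.Icc (0:ℝ) (D.ℓ i), u i t - v i t ≤ u i 0 - v i 0) :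
    ∀ i, ∃ plow pbar : ℝ,
      diffQuotLiminf (u i) = (plow : EReal) ∧
      diffQuotLimsup (u i) = (pbar : EReal) ∧
      D1plus (u i) = Set.Ici pbar := by
  intro i
  obtain ⟨hC0, hHamS, _hdiff, hcoerS, hkir⟩ := hSteady
  have hUp : ∀ j, ∃ Lj : ℝ, 0 ≤ Lj ∧ ∀ᶠ t in 𝓝[>] (0:ℝ), u j t ≤ u j 0 + Lj * t :=
    fun j => upper_bound D C hC0 hHamS hcoerS u hu j
  choose L hL0 hLe using hUp
  obtain ⟨K, hK⟩ := lower_bound D C hC0 hHamS hcoerS hkir u hu i L hL0 hLe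
  have hposev : ∀ᶠ t in 𝓝[>] (0:ℝ), (0:ℝ) < t :=
    eventually_iff.mpr (self_mem_nhdsWithin : Set.Ioi (0:ℝ) ∈ 𝓝[>] (0:ℝ))
  have hub : ∀ᶠ t in 𝓝[>] (0:ℝ), (u i t - u i 0) / t ≤ L i := by
    filter_upwards [hLe i, hposev] with t h1 h2
    rw [div_le_iff₀ h2]
    linarith
  have hlb : ∀ᶠ t in 𝓝[>] (0:ℝ), -K ≤ (u i t - u i 0) / t := by
    filter_upwards [hK, hposev] with t h1 h2
    rw [le_div_iff₀ h2]
    linarith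
  have hubE : diffQuotLimsup (u i) ≤ ((L i : ℝ) : EReal) :=
    limsup_le_of_le (by isBoundedDefault)
      (hub.mono fun t ht => by exact_mod_cast ht)
  have hlbE : ((-K : ℝ) : EReal) ≤ diffQuotLiminf (u i) :=
    le_liminf_of_le (by isBoundedDefault)
      (hlb.mono fun t ht => by exact_mod_cast ht)
  have hle : diffQuotLiminf (u i) ≤ diffQuotLimsup (u i) := liminf_le_limsup
  have hnetop : diffQuotLimsup (u i) ≠ ⊤ :=
    (lt_of_le_of_lt hubE (EReal.coe_lt_top _)).ne
  have hnebot : diffQuotLiminf (u i) ≠ ⊥ :=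
    (lt_of_lt_of_le (EReal.bot_lt_coe _) hlbE).ne'
  have hlitop : diffQuotLiminf (u i) ≠ ⊤ :=
    (lt_of_le_of_lt (le_trans hle hubE) (EReal.coe_lt_top _)).ne
  have hlsbot : diffQuotLimsup (u i) ≠ ⊥ :=
    (lt_of_lt_of_le (EReal.bot_lt_coe _) (le_trans hlbE hle)).ne'
  refine ⟨(diffQuotLiminf (u i)).toReal, (diffQuotLimsup (u i)).toReal,
    (EReal.coe_toReal hlitop hnebot).symm, (EReal.coe_toReal hnetop hlsbot).symm, ?_⟩
  have hpbar : diffQuotLimsup (u i) = (((diffQuotLimsup (u i)).toReal : ℝ) : EReal) :=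
    (EReal.coe_toReal hnetop hlsbot).symm
  ext p
  simp only [D1plus, Set.mem_setOf_eq, Set.mem_Ici]
  constructor
  · intro hp
    have key : ∀ ε : ℝ, 0 < ε → (diffQuotLimsup (u i)).toReal ≤ p + ε := by
      intro ε hε
      have h4 := hp ε hε
      have h5 : ∀ᶠ t in 𝓝[>] (0:ℝ), ((u i t - u i 0) / t : ℝ) ≤ p + ε := by
        filter_upwards [h4, hposev] with t h6 h7
        rw [div_le_iff₀ h7]
        linarith
      have h6 : diffQuotLimsup (u i) ≤ ((p + ε : ℝ) : EReal) :=
        limsup_le_of_le (by isBoundedDefault)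
          (h5.mono fun t ht => by exact_mod_cast ht)
      rw [hpbar] at h6
      exact_mod_cast h6
    exact le_of_forall_pos_le_add key
  · intro hp ε hε
    have h4 : diffQuotLimsup (u i) < ((p + ε : ℝ) : EReal) := by
      rw [hpbar]
      exact_mod_cast (by linarith : (diffQuotLimsup (u i)).toReal < p + ε)
    have h5 := eventually_lt_of_limsup_lt h4
    filter_upwards [h5, hposev] with t h6 h7
    have h8 : (u i t - u i 0) / t < p + ε := by exact_mod_cast h6
    rw [div_lt_iff₀ h7] at h8
    linarith

end Paper
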